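/- Let b ≥ 2 be an integer and let x and y be nonzero integers, with unique (−b)-representations ⟨x⟩_{−b} and ⟨y⟩_{−b} (words over {0, …, b−1} with nonzero leading digit). Then x < y if and only if ⟨x⟩_{−b} ≺_sa ⟨y⟩_{−b} in the short-alternate order. -/

import Mathlib

/-- The value of a finite digit word (most significant digit first) in base `-b`:
`valNegB b (w_k ⋯ w_0) = Σ_{i=0}^{k} w_i (-b)^i`, computed by Horner's rule. -/
def valNegB (b : ℤ) (w : List ℤ) : ℤ :=
  w.foldl (fun acc d => -b * acc + d) 0

/-- `w` is the (-b)-representation of `N` (most significant digit first): a nonempty word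
with digits in `{0, …, b-1}`, nonzero leading digit, and value `N`. -/
def IsNegRep (b N : ℤ) (w : List ℤ) : Prop :=
  w ≠ [] ∧ (∀ d ∈ w, 0 ≤ d ∧ d < b) ∧ w.head? ≠ some 0 ∧ valNegB b w = N

/-- The alternate order on finite words of the same length (1-indexed positions: the entry
at list index `k` is the letter at position `k+1`, whence the sign `(-1)^(k+1)`). -/
def AltLtW (u v : List ℤ) : Prop :=
  ∃ k : ℕ, k < u.length ∧ k < v.length ∧ (∀ i < k, u.getD i 0 = v.getD i 0) ∧
    (-1 : ℤ) ^ (k + 1) * (u.getD k 0 - v.getD k 0) < 0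

/-- Pad a word on the left with the letter `0 = min A` up to length `n`. -/
def padTo (n : ℕ) (u : List ℤ) : List ℤ :=
  List.replicate (n - u.length) 0 ++ u

/-- The short-alternate order `≺_sa` on finite words over `{0, …, b-1}` (with `min A = 0`):
(i) both lengths odd and `ℓ < m`, or equal odd lengths and `0u ≺_alt 0v`;
(ii) both lengths even and `ℓ > m`, or equal even lengths and `u ≺_alt v`;
(iii) `ℓ < m`: compare `0^{m-ℓ}u` with `v`; (iv) `ℓ > m`: compare `u` with `0^{ℓ-m}v`
(cases (iii) and (iv) are unfolded via their reduction to words of equal length). -/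
def SaLt (u v : List ℤ) : Prop :=
  (Odd u.length ∧ Odd v.length ∧ u.length < v.length) ∨
  (Even u.length ∧ Even v.length ∧ v.length < u.length) ∨
  (Odd (max u.length v.length) ∧
    AltLtW (0 :: padTo (max u.length v.length) u) (0 :: padTo (max u.length v.length) v)) ∨
  (Even (max u.length v.length) ∧
    AltLtW (padTo (max u.length v.length) u) (padTo (max u.length v.length) v))

lemma foldl_shift (b : ℤ) (w : List ℤ) : ∀ a : ℤ,
    w.foldl (fun acc d => -b * acc + d) a = (-b) ^ w.length * a + valNegB b w := by
  induction w with
  | nil => intro a; simp [valNegB]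
  | cons d w ih =>
    intro a
    have h0 : valNegB b (d :: w) = (-b) ^ w.length * d + valNegB b w := by
      show w.foldl _ (-b * 0 + d) = _
      rw [ih (-b * 0 + d)]; ring
    show w.foldl _ (-b * a + d) = _
    rw [ih (-b * a + d), h0, List.length_cons, pow_succ]; ring

lemma valNegB_cons (b d : ℤ) (w : List ℤ) :
    valNegB b (d :: w) = (-b) ^ w.length * d + valNegB b w := by
  show w.foldl _ (-b * 0 + d) = _
  rw [foldl_shift b w (-b * 0 + d)]; ring

lemma valNegB_replicate_append (b : ℤ) (k : ℕ) (u : List ℤ) :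
    valNegB b (List.replicate k 0 ++ u) = valNegB b u := by
  induction k with
  | zero => simp
  | succ k ih => rw [List.replicate_succ, List.cons_append, valNegB_cons, ih]; ring

def mmaxN (b : ℤ) : ℕ → ℤ
  | 0 => 0
  | n + 1 => (if Even n then (b - 1) * b ^ n else 0) + mmaxN b n

def mminN (b : ℤ) : ℕ → ℤ
  | 0 => 0
  | n + 1 => (if Even n then 0 else -((b - 1) * b ^ n)) + mminN b n

lemma span (b : ℤ) : ∀ n : ℕ, mmaxN b n - mminN b n = b ^ n - 1 := by
  intro n
  induction n with
  | zero => simp [mmaxN, mminN]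
  | succ n ih =>
    by_cases h : Even n <;> simp [mmaxN, mminN, h, pow_succ] <;> nlinarith [ih]

lemma mmaxN_mono (b : ℤ) (hb : 2 ≤ b) : ∀ {m n : ℕ}, m ≤ n → mmaxN b m ≤ mmaxN b n := by
  intro m n h
  induction n, h using Nat.le_induction with
  | base => exact le_refl _
  | succ n hmn ih =>
    refine le_trans ih ?_
    have hb1 : (0:ℤ) < b ^ n := by positivity
    have : (0:ℤ) ≤ (b-1) * b ^ n := by nlinarith
    by_cases h : Even n <;> simp [mmaxN, h] <;> linarith

lemma mminN_anti (b : ℤ) (hb : 2 ≤ b) : ∀ {m n : ℕ}, m ≤ n → mminN b n ≤ mminN b m := by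
  intro m n h
  induction n, h using Nat.le_induction with
  | base => exact le_refl _
  | succ n hmn ih =>
    refine le_trans ?_ ih
    have hb1 : (0:ℤ) < b ^ n := by positivity
    have : (0:ℤ) ≤ (b-1) * b ^ n := by nlinarith
    by_cases h : Even n <;> simp [mminN, h] <;> linarith

lemma val_bounds (b : ℤ) (hb : 2 ≤ b) : ∀ w : List ℤ, (∀ d ∈ w, 0 ≤ d ∧ d < b) →
    mminN b w.length ≤ valNegB b w ∧ valNegB b w ≤ mmaxN b w.length := by
  intro w
  induction w with
  | nil => intro _; simp [valNegB, mmaxN, mminN]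
  | cons d w ih =>
    intro h
    obtain ⟨hd0, hdb⟩ := h d (List.mem_cons_self)
    obtain ⟨h1, h2⟩ := ih (fun e he => h e (List.mem_cons_of_mem d he))
    have hbp : (0:ℤ) < b ^ w.length := by positivity
    have hb0 : (0:ℤ) < b := by linarith
    rw [valNegB_cons, List.length_cons]
    rcases Nat.even_or_odd w.length with he | ho
    · rw [he.neg_pow]
      have hif : Even w.length := he
      constructor
      · simp [mminN, hif]; nlinarith
      · simp [mmaxN, hif]; nlinarith
    · rw [ho.neg_pow]
      have hif : ¬ Even w.length := Nat.not_even_iff_odd.mpr ho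
      constructor
      · simp [mminN, hif]; nlinarith
      · simp [mmaxN, hif]; nlinarith

lemma neg_one_pow_congr_mod2 {a c : ℕ} (h : a % 2 = c % 2) : ((-1:ℤ)) ^ a = (-1) ^ c := by
  conv_lhs => rw [← Nat.div_add_mod a 2]
  conv_rhs => rw [← Nat.div_add_mod c 2]
  rw [pow_add, pow_add, pow_mul, pow_mul]
  norm_num [h]

lemma cmp_lemma (b : ℤ) (hb : 2 ≤ b) : ∀ (u v : List ℤ), u.length = v.length →
    (∀ d ∈ u, 0 ≤ d ∧ d < b) → (∀ d ∈ v, 0 ≤ d ∧ d < b) →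
    (valNegB b u < valNegB b v ↔ ∃ k, k < u.length ∧ (∀ i < k, u.getD i 0 = v.getD i 0) ∧
      (-1:ℤ) ^ (u.length + k + 1) * (u.getD k 0 - v.getD k 0) < 0) := by
  intro u
  induction u with
  | nil =>
    intro v hlen _ _
    have : v = [] := by
      cases v with
      | nil => rfl
      | cons e v' => simp at hlen
    subst this
    simp [valNegB]
  | cons d u ih =>
    intro v hlen hu hv
    cases v with
    | nil => simp at hlen
    | cons e v' =>
      have hlen' : u.length = v'.length := by simpa using hlen
      have hud : ∀ d' ∈ u, 0 ≤ d' ∧ d' < b := fun e' he' => hu e' (List.mem_cons_of_mem d he')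
      have hvd : ∀ d' ∈ v', 0 ≤ d' ∧ d' < b := fun e' he' => hv e' (List.mem_cons_of_mem e he')
      obtain ⟨hu1, hu2⟩ := val_bounds b hb u hud
      obtain ⟨hv1, hv2⟩ := val_bounds b hb v' hvd
      rw [hlen'] at hu1 hu2
      have hspan := span b v'.length
      have hdiff1 : valNegB b u - valNegB b v' ≤ b ^ v'.length - 1 := by linarith
      have hdiff2 : -(b ^ v'.length - 1) ≤ valNegB b u - valNegB b v' := by linarith
      rw [valNegB_cons, valNegB_cons, hlen']
      by_cases hde : d = e
      · subst hde
        have hL : (-b) ^ v'.length * d + valNegB b u < (-b) ^ v'.length * d + valNegB b v'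
            ↔ valNegB b u < valNegB b v' := by constructor <;> intro h <;> linarith
        rw [hL, ih v' hlen' hud hvd]
        constructor
        · rintro ⟨k, hk, hagree, hsign⟩
          refine ⟨k + 1, by simpa using Nat.succ_lt_succ hk, ?_, ?_⟩
          · intro i hi
            cases i with
            | zero => simp
            | succ j => simpa using hagree j (by omega)
          · have : ((-1:ℤ)) ^ ((d :: u).length + (k+1) + 1) = (-1) ^ (u.length + k + 1) := by
              apply neg_one_pow_congr_mod2; simp [List.length_cons]; omega
            rw [this]
            simpa using hsign
        · rintro ⟨k, hk, hagree, hsign⟩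
          cases k with
          | zero => simp at hsign
          | succ j =>
            refine ⟨j, by simpa [List.length_cons] using hk, ?_, ?_⟩
            · intro i hi
              have := hagree (i+1) (by omega)
              simpa using this
            · have : ((-1:ℤ)) ^ (u.length + j + 1) = (-1) ^ ((d :: u).length + (j+1) + 1) := by
                apply neg_one_pow_congr_mod2; simp [List.length_cons]; omega
              rw [this]
              simpa using hsign
      · -- leading digits differ
        have hbp : (0:ℤ) < b ^ v'.length := by positivity
        obtain ⟨c, hcval, hc2⟩ : ∃ c : ℤ, c = (-1:ℤ) ^ v'.length ∧ (c = 1 ∨ c = -1) := by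
          refine ⟨(-1) ^ v'.length, rfl, ?_⟩
          rcases Nat.even_or_odd v'.length with he | ho
          · left; rw [he.neg_one_pow]
          · right; rw [ho.neg_one_pow]
        have hcb : (-b : ℤ) ^ v'.length = c * b ^ v'.length := by rw [hcval, neg_pow]
        have hexp : ((-1:ℤ)) ^ ((d :: u).length + 0 + 1) = c := by
          have h9 : (d :: u).length + 0 + 1 = v'.length + 2 := by simp [hlen']
          rw [h9, hcval]; apply neg_one_pow_congr_mod2; omega
        have hkey : (-b) ^ v'.length * d + valNegB b u < (-b) ^ v'.length * e + valNegB b v'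
            ↔ c * (d - e) < 0 := by
          rw [hcb]
          constructor
          · intro h
            by_contra hcon
            push_neg at hcon
            have h1 : 1 ≤ c * (d - e) := by rcases hc2 with rfl | rfl <;> omega
            have h2 : b ^ v'.length * 1 ≤ b ^ v'.length * (c * (d - e)) :=
              mul_le_mul_of_nonneg_left h1 (le_of_lt hbp)
            nlinarith
          · intro h
            have h1 : c * (d - e) ≤ -1 := by rcases hc2 with rfl | rfl <;> omega
            have h2 : b ^ v'.length * (c * (d - e)) ≤ b ^ v'.length * (-1) :=
              mul_le_mul_of_nonneg_left h1 (le_of_lt hbp)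
            nlinarith
        rw [hkey]
        constructor
        · intro h
          refine ⟨0, by simp, ?_, ?_⟩
          · intro i hi; exact absurd hi (Nat.not_lt_zero i)
          · rw [hexp]; simpa using h
        · rintro ⟨k, hk, hagree, hsign⟩
          cases k with
          | zero =>
            rw [hexp] at hsign
            simpa using hsign
          | succ j =>
            exact absurd (by simpa using hagree 0 (by omega)) hde

lemma mag_odd (b : ℤ) (hb : 2 ≤ b) (u v : List ℤ)
    (hud : ∀ d ∈ u, 0 ≤ d ∧ d < b) (hvd : ∀ d ∈ v, 0 ≤ d ∧ d < b)
    (hvh : v.head? ≠ some 0)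
    (h1 : Odd u.length) (h2 : Odd v.length) (hlt : u.length < v.length) :
    valNegB b u < valNegB b v := by
  cases v with
  | nil => simp at h2
  | cons v0 v' =>
    have hv0 : v0 ≠ 0 := by simpa using hvh
    have hv01 : 1 ≤ v0 := by
      have := (hvd v0 (List.mem_cons_self)).1; omega
    have hv'd : ∀ d ∈ v', 0 ≤ d ∧ d < b := fun d hd => hvd d (List.mem_cons_of_mem v0 hd)
    have hlen2 : (v0 :: v').length = v'.length + 1 := by simp
    rw [hlen2] at h2 hlt
    obtain ⟨r, hr⟩ := h2
    obtain ⟨s, hs⟩ := h1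
    have hek : Even v'.length := ⟨r, by omega⟩
    obtain ⟨t, htk, hot, hut⟩ : ∃ t, v'.length = t + 1 ∧ ¬ Even t ∧ u.length ≤ t := by
      refine ⟨v'.length - 1, by omega, ?_, by omega⟩
      rintro ⟨w, hw⟩; omega
    have hbu := (val_bounds b hb u hud).2
    have hbv := (val_bounds b hb v' hv'd).1
    have hmono := mmaxN_mono b hb hut
    have hsp := span b t
    have hbt : (0:ℤ) < b ^ t := by positivity
    have hbk : (0:ℤ) < b ^ v'.length := by positivity
    have hmm : mminN b v'.length = -((b-1) * b ^ t) + mminN b t := by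
      rw [htk]; simp [mminN, hot]
    have hpk : (b:ℤ) ^ v'.length = b * b ^ t := by rw [htk, pow_succ]; ring
    rw [valNegB_cons, hek.neg_pow]
    have hmul : b ^ v'.length * 1 ≤ b ^ v'.length * v0 :=
      mul_le_mul_of_nonneg_left hv01 (le_of_lt hbk)
    nlinarith

lemma mag_even (b : ℤ) (hb : 2 ≤ b) (u v : List ℤ)
    (hud : ∀ d ∈ u, 0 ≤ d ∧ d < b) (hvd : ∀ d ∈ v, 0 ≤ d ∧ d < b)
    (huh : u.head? ≠ some 0)
    (h1 : Even u.length) (h2 : Even v.length) (hlt : v.length < u.length) :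
    valNegB b u < valNegB b v := by
  cases u with
  | nil => simp at hlt
  | cons u0 u' =>
    have hu0 : u0 ≠ 0 := by simpa using huh
    have hu01 : 1 ≤ u0 := by
      have := (hud u0 (List.mem_cons_self)).1; omega
    have hu'd : ∀ d ∈ u', 0 ≤ d ∧ d < b := fun d hd => hud d (List.mem_cons_of_mem u0 hd)
    have hlen2 : (u0 :: u').length = u'.length + 1 := by simp
    rw [hlen2] at h1 hlt
    obtain ⟨r, hr⟩ := h1
    obtain ⟨s, hs⟩ := h2
    have hok : Odd u'.length := ⟨r - 1, by omega⟩
    obtain ⟨t, htk, het, hvt⟩ : ∃ t, u'.length = t + 1 ∧ Even t ∧ v.length ≤ t := by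
      exact ⟨u'.length - 1, by omega, ⟨r - 1, by omega⟩, by omega⟩
    have hbu := (val_bounds b hb u' hu'd).2
    have hbv := (val_bounds b hb v hvd).1
    have hanti := mminN_anti b hb hvt
    have hsp := span b t
    have hbt : (0:ℤ) < b ^ t := by positivity
    have hbk : (0:ℤ) < b ^ u'.length := by positivity
    have hmm : mmaxN b u'.length = (b-1) * b ^ t + mmaxN b t := by
      rw [htk]; simp [mmaxN, het]
    have hpk : (b:ℤ) ^ u'.length = b * b ^ t := by rw [htk, pow_succ]; ring
    rw [valNegB_cons, hok.neg_pow]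
    have hmul : b ^ u'.length * 1 ≤ b ^ u'.length * u0 :=
      mul_le_mul_of_nonneg_left hu01 (le_of_lt hbk)
    nlinarith

/-- For nonzero integers `x, y` with (-b)-representations `u, v`, we have `x < y` iff
`u ≺_sa v` in the short-alternate order. -/
theorem lt_iff_shortAlternate (b : ℤ) (hb : 2 ≤ b) (x y : ℤ) (hx : x ≠ 0) (hy : y ≠ 0)
    (u v : List ℤ) (hu : IsNegRep b x u) (hv : IsNegRep b y v) :
    x < y ↔ SaLt u v := by
  obtain ⟨hune, hud, huh, huval⟩ := hu
  obtain ⟨hvne, hvd, hvh, hvval⟩ := hv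
  unfold SaLt AltLtW
  set n := max u.length v.length with hn
  set U := padTo n u with hUdef
  set V := padTo n v with hVdef
  have hun : u.length ≤ n := le_max_left _ _
  have hvn : v.length ≤ n := le_max_right _ _
  have hUlen : U.length = n := by
    rw [hUdef]; unfold padTo; rw [List.length_append, List.length_replicate]; omega
  have hVlen : V.length = n := by
    rw [hVdef]; unfold padTo; rw [List.length_append, List.length_replicate]; omega
  have hUd : ∀ d ∈ U, 0 ≤ d ∧ d < b := by
    intro d hd
    rw [hUdef] at hd; unfold padTo at hd
    rcases List.mem_append.mp hd with h | h
    · rw [List.eq_of_mem_replicate h]; constructor <;> omega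
    · exact hud d h
  have hVd : ∀ d ∈ V, 0 ≤ d ∧ d < b := by
    intro d hd
    rw [hVdef] at hd; unfold padTo at hd
    rcases List.mem_append.mp hd with h | h
    · rw [List.eq_of_mem_replicate h]; constructor <;> omega
    · exact hvd d h
  have hUval : valNegB b U = x := by
    rw [hUdef]; unfold padTo; rw [valNegB_replicate_append]; exact huval
  have hVval : valNegB b V = y := by
    rw [hVdef]; unfold padTo; rw [valNegB_replicate_append]; exact hvval
  have hcmp := cmp_lemma b hb U V (hUlen.trans hVlen.symm) hUd hVd
  rw [hUval, hVval, hUlen] at hcmp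
  constructor
  · intro hxy
    obtain ⟨k, hk, hag, hs⟩ := hcmp.mp hxy
    rcases Nat.even_or_odd n with he | ho
    · refine Or.inr (Or.inr (Or.inr ⟨he, k, ?_, ?_, hag, ?_⟩))
      · omega
      · rw [hVlen]; omega
      · have hpow : ((-1:ℤ)) ^ (k + 1) = (-1) ^ (n + k + 1) := by
          apply neg_one_pow_congr_mod2; obtain ⟨r, hr⟩ := he; omega
        rw [hpow]; exact hs
    · refine Or.inr (Or.inr (Or.inl ⟨ho, k + 1, ?_, ?_, ?_, ?_⟩))
      · simp [hUlen]; omega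
      · simp [hVlen]; omega
      · intro i hi
        cases i with
        | zero => rfl
        | succ j => simpa using hag j (by omega)
      · simp only [List.getD_cons_succ]
        have hpow : ((-1:ℤ)) ^ (k + 1 + 1) = (-1) ^ (n + k + 1) := by
          apply neg_one_pow_congr_mod2; obtain ⟨r, hr⟩ := ho; omega
        rw [hpow]; exact hs
  · rintro (⟨h1, h2, h3⟩ | ⟨h1, h2, h3⟩ | ⟨ho, k, hk1, hk2, hag, hs⟩ | ⟨he, k, hk1, hk2, hag, hs⟩)
    · rw [← huval, ← hvval]; exact mag_odd b hb u v hud hvd hvh h1 h2 h3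
    · rw [← huval, ← hvval]; exact mag_even b hb u v hud hvd huh h1 h2 h3
    · apply hcmp.mpr
      cases k with
      | zero => simp at hs
      | succ j =>
        refine ⟨j, ?_, ?_, ?_⟩
        · simp [hUlen] at hk1; omega
        · intro i hi; simpa using hag (i + 1) (by omega)
        · simp only [List.getD_cons_succ] at hs
          have hpow : ((-1:ℤ)) ^ (n + j + 1) = (-1) ^ (j + 1 + 1) := by
            apply neg_one_pow_congr_mod2; obtain ⟨r, hr⟩ := ho; omega
          rw [hpow]; exact hs
    · apply hcmp.mpr
      refine ⟨k, ?_, hag, ?_⟩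
      · omega
      · have hpow : ((-1:ℤ)) ^ (n + k + 1) = (-1) ^ (k + 1) := by
          apply neg_one_pow_congr_mod2; obtain ⟨r, hr⟩ := he; omega
        rw [hpow]; exact hs
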